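/- Assume c satisfies Conditions (i)–(iv), fix μ, ν ∈ L¹(a), and let γ* ∈ P(S) be the (unique) minimizer of γ ↦ W_c(μ,γ) + R(γ‖ν). Then every g ∈ Lip(c,S) satisfies ∫_S |g| dγ* < ∞. -/

import Mathlib

open MeasureTheory Filter Topology BoundedContinuousFunction Set ENNReal

noncomputable section

variable {S : Type*}

/-- Integral of a function against a finite signed measure. -/
def sInt [MeasurableSpace S] (μ : MeasureTheory.SignedMeasure S) (g : S → ℝ) : ℝ :=
  ∫ x, g x ∂μ.toJordanDecomposition.posPart - ∫ x, g x ∂μ.toJordanDecomposition.negPart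

/-- Γ-divergence, signed first argument. -/
def GdivS [MeasurableSpace S] [TopologicalSpace S]
    (Γ : Set (BoundedContinuousFunction S ℝ)) (μ : SignedMeasure S) (ν : Measure S) : EReal :=
  ⨆ g ∈ Γ, ((sInt μ g - Real.log (∫ x, Real.exp (g x) ∂ν) : ℝ) : EReal)

/-- Γ-divergence. -/
def Gdiv [MeasurableSpace S] [TopologicalSpace S]
    (Γ : Set (BoundedContinuousFunction S ℝ)) (μ ν : Measure S) : EReal :=
  ⨆ g ∈ Γ, ((∫ x, g x ∂μ - Real.log (∫ x, Real.exp (g x) ∂ν) : ℝ) : EReal)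

/-- W_Γ of a signed measure. -/
def WdivS [MeasurableSpace S] [TopologicalSpace S]
    (Γ : Set (BoundedContinuousFunction S ℝ)) (η : SignedMeasure S) : EReal :=
  ⨆ g ∈ Γ, ((sInt η g : ℝ) : EReal)

-- Relative entropy
open scoped Classical in
def relEnt [MeasurableSpace S] (γ ν : Measure S) : EReal :=
  if γ ≪ ν ∧ Integrable (fun x => Real.log ((γ.rnDeriv ν x).toReal)) γ
  then ((∫ x, Real.log ((γ.rnDeriv ν x).toReal) ∂γ : ℝ) : EReal)
  else ⊤

/-- The weak topology on C_b(S) induced by M(S). -/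
def cbWeak (S : Type*) [MeasurableSpace S] [TopologicalSpace S] :
    TopologicalSpace (BoundedContinuousFunction S ℝ) :=
  TopologicalSpace.induced (fun f (μ : SignedMeasure S) => sInt μ f) inferInstance

/-- Admissible sets of test functions. -/
structure Admissible [MeasurableSpace S] [TopologicalSpace S]
    (Γ : Set (BoundedContinuousFunction S ℝ)) : Prop where
  convex : Convex ℝ Γ
  closed : @IsClosed _ (cbWeak S) Γ
  neg_mem : ∀ g ∈ Γ, -g ∈ Γ
  const_mem : ∀ r : ℝ, BoundedContinuousFunction.const S r ∈ Γ
  determining : ∀ μ ν : Measure S, IsProbabilityMeasure μ → IsProbabilityMeasure ν →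
    (∀ g ∈ Γ, ∫ x, g x ∂μ = ∫ x, g x ∂ν) → μ = ν

/-- Bounded continuous c-Lipschitz functions. -/
def LipB [TopologicalSpace S] (c : S → S → ℝ≥0∞) : Set (BoundedContinuousFunction S ℝ) :=
  {f | ∀ x y, ((f x - f y : ℝ) : EReal) ≤ (c x y : EReal)}

/-- Continuous (possibly unbounded) c-Lipschitz functions. -/
def LipU [TopologicalSpace S] (c : S → S → ℝ≥0∞) : Set (S → ℝ) :=
  {f | Continuous f ∧ ∀ x y, ((f x - f y : ℝ) : EReal) ≤ (c x y : EReal)}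

/-- Optimal transport cost in dual form. -/
def Wc [MeasurableSpace S] [TopologicalSpace S] (c : S → S → ℝ≥0∞) (μ γ : Measure S) : EReal :=
  ⨆ g ∈ LipB c, ((∫ x, g x ∂μ - ∫ x, g x ∂γ : ℝ) : EReal)

/-- Topological support of a measure. -/
def msupport [TopologicalSpace S] [MeasurableSpace S] (ν : Measure S) : Set S :=
  {x | ∀ U ∈ 𝓝 x, 0 < ν U}

/-- Upper (outer) Lebesgue integral. -/
def upperLintegral [MeasurableSpace S] (π : Measure S) (F : S → ℝ≥0∞) : ℝ≥0∞ :=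
  ⨅ G ∈ {G : S → ℝ≥0∞ | Measurable G ∧ ∀ x, F x ≤ G x}, ∫⁻ x, G x ∂π



/-- Auxiliary: a c-Lipschitz function satisfies the real bound via `a`. -/
lemma lip_real_bound' {S : Type*} {c : S → S → ℝ≥0∞} {a : S → ℝ}
    (ha0 : ∀ x, 0 ≤ a x) (hca : ∀ x y, c x y ≤ ENNReal.ofReal (a x + a y))
    {h : S → ℝ} (hh : ∀ x y, ((h x - h y : ℝ) : EReal) ≤ (c x y : EReal)) (x y : S) :
    h x - h y ≤ a x + a y := by
  have h1 : ((h x - h y : ℝ) : EReal) ≤ ((a x + a y : ℝ) : EReal) := by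
    refine (hh x y).trans ?_
    calc (c x y : EReal) ≤ ((ENNReal.ofReal (a x + a y) : ℝ≥0∞) : EReal) :=
          EReal.coe_ennreal_le_coe_ennreal_iff.mpr (hca x y)
      _ = ((a x + a y : ℝ) : EReal) := by
          rw [EReal.coe_ennreal_ofReal, max_eq_left (by have := ha0 x; have := ha0 y; linarith)]
  exact_mod_cast h1

lemma min_sub_min_le_abs (p q r : ℝ) : min p r - min q r ≤ |p - q| := by
  rcases min_cases p r with ⟨e1,l1⟩|⟨e1,l1⟩ <;> rcases min_cases q r with ⟨e2,l2⟩|⟨e2,l2⟩ <;>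
    rw [e1, e2] <;> rcases abs_cases (p - q) with ⟨e3,l3⟩|⟨e3,l3⟩ <;> rw [e3] <;> linarith

theorem stmt10 {S : Type*} [MetricSpace S] [CompleteSpace S] [SecondCountableTopology S] [MeasurableSpace S] [BorelSpace S]
    (c : S → S → ℝ≥0∞) (hsymm : ∀ x y, c x y = c y x)
    (Q : Set (BoundedContinuousFunction S ℝ)) (hQne : Q.Nonempty)
    (hrep : ∀ x y, (c x y : EReal) = ⨆ u ∈ Q, ((u x - u y : ℝ) : EReal))
    (hdet : ∀ μ ν : Measure S, IsProbabilityMeasure μ → IsProbabilityMeasure ν →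
      (∀ g ∈ LipB c, ∫ x, g x ∂μ = ∫ x, g x ∂ν) → μ = ν)
    (a : S → ℝ) (ha0 : ∀ x, 0 ≤ a x)
    (hca : ∀ x y, c x y ≤ ENNReal.ofReal (a x + a y))
    (hK : ∃ K : ℕ → Set S, (∀ m, IsCompact (K m)) ∧ Monotone K ∧ (⋃ m, K m) = Set.univ ∧
      ∀ m, ∃ θ : ℝ → ℝ, (∀ r, 0 ≤ θ r) ∧ Tendsto θ (𝓝[>] (0:ℝ)) (𝓝 0) ∧
        ∃ δ : ℝ, 0 < δ ∧ ∀ x ∈ K m, ∀ y ∈ K m, dist x y ≤ δ →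
          c x y ≤ ENNReal.ofReal (θ (dist x y)))
    (μ ν : Measure S) [IsProbabilityMeasure μ] [IsProbabilityMeasure ν]
    (hμa : Integrable a μ) (hνa : Integrable a ν)
    (γstar : Measure S) [IsProbabilityMeasure γstar]
    (hmin : ∀ γ : Measure S, IsProbabilityMeasure γ →
      Wc c μ γstar + relEnt γstar ν ≤ Wc c μ γ + relEnt γ ν) :
    ∀ g ∈ LipU c, Integrable g γstar := by
  classical
  intro g hgmem
  obtain ⟨hgc, hg2⟩ := hgmem
  rcases isEmpty_or_nonempty S with hS | hS
  · have hg0 : g = fun _ => (0:ℝ) := funext fun x => isEmptyElim x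
    rw [hg0]; exact integrable_zero _ _ _
  obtain ⟨x₀⟩ := hS
  -- the zero function is in LipB c
  have h0mem : (0 : S →ᵇ ℝ) ∈ LipB c := by
    intro x y
    simp only [BoundedContinuousFunction.coe_zero, Pi.zero_apply, sub_zero]
    exact le_trans (by norm_num) (EReal.coe_ennreal_nonneg _)
  -- negation is closed in LipB c
  have hneg : ∀ h ∈ LipB c, -h ∈ LipB c := by
    intro h hh x y
    simp only [BoundedContinuousFunction.coe_neg, Pi.neg_apply]
    have e : (-h x - -h y : ℝ) = h y - h x := by ring
    rw [e, hsymm x y]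
    exact hh y x
  -- bound Wc c μ ν
  set A : ℝ := ∫ x, a x ∂ν with hA
  set M : ℝ := ∫ x, a x ∂μ + A with hM
  have hWcν : Wc c μ ν ≤ ((M : ℝ) : EReal) := by
    refine iSup₂_le fun h hh => ?_
    rw [EReal.coe_le_coe_iff]
    -- pointwise: h x ≤ a x + A + ∫ h dν
    have hpt : ∀ x, (h : S → ℝ) x ≤ a x + A + ∫ y, (h : S → ℝ) y ∂ν := by
      intro x
      have hle : ∫ y, ((h : S → ℝ) x - a x - a y) ∂ν ≤ ∫ y, (h : S → ℝ) y ∂ν := by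
        refine integral_mono ((integrable_const _).sub hνa) (h.integrable ν) fun y => ?_
        have := lip_real_bound' ha0 hca hh x y
        simp only [Pi.sub_apply]
        linarith
      rw [integral_sub (integrable_const _) hνa, integral_const] at hle
      simp only [measure_univ, probReal_univ, ENNReal.toReal_one, one_smul] at hle
      linarith
    have h2 : ∫ x, (h : S → ℝ) x ∂μ ≤ ∫ x, (a x + (A + ∫ y, (h : S → ℝ) y ∂ν)) ∂μ := by
      refine integral_mono (h.integrable μ) (hμa.add (integrable_const _)) fun x => ?_
      have := hpt x; linarith
    rw [integral_add hμa (integrable_const _), integral_const] at h2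
    simp only [measure_univ, probReal_univ, ENNReal.toReal_one, one_smul] at h2
    rw [hM]; linarith
  -- relEnt ν ν = 0
  have hRνν : relEnt ν ν = (0 : EReal) := by
    have hae : (fun x => Real.log ((ν.rnDeriv ν x).toReal)) =ᵐ[ν] fun _ => (0:ℝ) := by
      filter_upwards [Measure.rnDeriv_self ν] with x hx
      simp [hx]
    rw [relEnt, if_pos ⟨Measure.AbsolutelyContinuous.rfl, (integrable_zero _ _ _).congr hae.symm⟩,
      integral_congr_ae hae, integral_zero]
    rfl
  have hmν := hmin ν inferInstance
  rw [hRνν, add_zero] at hmν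
  have hRnb : relEnt γstar ν ≠ ⊥ := by
    rw [relEnt]; split_ifs <;> simp
  have hW0 : (0 : EReal) ≤ Wc c μ γstar := by
    refine le_iSup₂_of_le 0 h0mem ?_
    simp
  have hWnb : Wc c μ γstar ≠ ⊥ := fun hb => by rw [hb] at hW0; simp at hW0
  have hWT : Wc c μ γstar ≠ ⊤ := by
    intro htop
    rw [htop, EReal.top_add_of_ne_bot hRnb] at hmν
    exact (EReal.coe_lt_top M).not_ge (hmν.trans hWcν)
  set w : ℝ := (Wc c μ γstar).toReal with hw
  have hWeq : ((w : ℝ) : EReal) = Wc c μ γstar := EReal.coe_toReal hWT hWnb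
  -- key estimate: for h ∈ LipB c, ∫ h dγstar ≤ ∫ h dμ + w
  have hE : ∀ h ∈ LipB c, ∫ x, (h : S → ℝ) x ∂γstar ≤ ∫ x, (h : S → ℝ) x ∂μ + w := by
    intro h hh
    have h1 : ((∫ x, ((-h : S →ᵇ ℝ) : S → ℝ) x ∂μ - ∫ x, ((-h : S →ᵇ ℝ) : S → ℝ) x ∂γstar : ℝ) : EReal)
        ≤ Wc c μ γstar := le_iSup₂_of_le (-h) (hneg h hh) le_rfl
    rw [← hWeq, EReal.coe_le_coe_iff] at h1
    simp only [BoundedContinuousFunction.coe_neg, Pi.neg_apply] at h1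
    rw [integral_neg, integral_neg] at h1
    linarith
  -- |g x - g y| bound by c
  have habs_le : ∀ x y, ((|g x - g y| : ℝ) : EReal) ≤ (c x y : EReal) := by
    intro x y
    rcases abs_cases (g x - g y) with ⟨e, _⟩ | ⟨e, _⟩
    · rw [e]; exact hg2 x y
    · rw [e]
      have e2 : (-(g x - g y) : ℝ) = g y - g x := by ring
      rw [e2, hsymm x y]
      exact hg2 y x
  -- |g| is μ-integrable
  have hgabs : Integrable (fun x => |g x|) μ := by
    refine Integrable.mono' (((integrable_const (|g x₀| + a x₀)).add hμa)) ?_ ?_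
    · exact (continuous_abs.comp hgc).aestronglyMeasurable
    · refine ae_of_all _ fun x => ?_
      have h1 := lip_real_bound' ha0 hca hg2 x x₀
      have h2 := lip_real_bound' ha0 hca hg2 x₀ x
      rw [Real.norm_eq_abs, abs_abs]
      rcases abs_cases (g x) with ⟨e, _⟩ | ⟨e, _⟩ <;> rw [e] <;>
        rcases abs_cases (g x₀) with ⟨e2, _⟩ | ⟨e2, _⟩ <;> simp only [Pi.add_apply] <;> linarith
  -- the truncations
  set fB : ℕ → S →ᵇ ℝ := fun n =>
    BoundedContinuousFunction.mkOfBound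
      ⟨fun x => min |g x| (n : ℝ), (continuous_abs.comp hgc).min continuous_const⟩ (n : ℝ)
      (by
        intro x y
        rw [Real.dist_eq, abs_le]
        constructor
        · have : (0:ℝ) ≤ min |g y| (n:ℝ) := le_min (abs_nonneg _) n.cast_nonneg
          have h2 : min |g x| (n:ℝ) ≥ 0 := le_min (abs_nonneg _) n.cast_nonneg
          have h3 : min |g y| (n:ℝ) ≤ n := min_le_right _ _
          simp only [ContinuousMap.coe_mk]
          linarith
        · have h2 : min |g y| (n:ℝ) ≥ 0 := le_min (abs_nonneg _) n.cast_nonneg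
          have h3 : min |g x| (n:ℝ) ≤ n := min_le_right _ _
          simp only [ContinuousMap.coe_mk]
          linarith) with hfB
  have hfBapp : ∀ n x, (fB n : S → ℝ) x = min |g x| (n : ℝ) := fun n x => rfl
  have hfBmem : ∀ n, fB n ∈ LipB c := by
    intro n x y
    rw [hfBapp, hfBapp]
    refine le_trans ?_ (habs_le x y)
    rw [EReal.coe_le_coe_iff]
    exact (min_sub_min_le_abs _ _ _).trans (abs_abs_sub_abs_le_abs_sub _ _)
  set C : ℝ := ∫ x, |g x| ∂μ + w with hC
  have hbd : ∀ n, ∫ x, (fB n : S → ℝ) x ∂γstar ≤ C := by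
    intro n
    refine (hE (fB n) (hfBmem n)).trans ?_
    have : ∫ x, (fB n : S → ℝ) x ∂μ ≤ ∫ x, |g x| ∂μ :=
      integral_mono ((fB n).integrable μ) hgabs fun x => by rw [hfBapp]; exact min_le_left _ _
    rw [hC]; linarith
  have hfBnn : ∀ n x, (0:ℝ) ≤ (fB n : S → ℝ) x := fun n x => by
    rw [hfBapp]; exact le_min (abs_nonneg _) n.cast_nonneg
  have hlin : ∀ n : ℕ, ∫⁻ x, ENNReal.ofReal (min |g x| (n : ℝ)) ∂γstar ≤ ENNReal.ofReal C := by
    intro n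
    have := ofReal_integral_eq_lintegral_ofReal ((fB n).integrable γstar)
      (ae_of_all _ (hfBnn n))
    calc ∫⁻ x, ENNReal.ofReal (min |g x| (n : ℝ)) ∂γstar
        = ENNReal.ofReal (∫ x, (fB n : S → ℝ) x ∂γstar) := this.symm
      _ ≤ ENNReal.ofReal C := ENNReal.ofReal_le_ofReal (hbd n)
  have hsup : ∀ x, (⨆ n : ℕ, ENNReal.ofReal (min |g x| (n : ℝ))) = ENNReal.ofReal |g x| := by
    intro x
    refine le_antisymm (iSup_le fun n => ENNReal.ofReal_le_ofReal (min_le_left _ _)) ?_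
    refine le_trans (le_of_eq ?_) (le_iSup (fun n : ℕ => ENNReal.ofReal (min |g x| (n:ℝ))) ⌈|g x|⌉₊)
    rw [min_eq_left (Nat.le_ceil _)]
  have hlim : ∫⁻ x, ENNReal.ofReal |g x| ∂γstar ≤ ENNReal.ofReal C := by
    have hmeas : ∀ n : ℕ, Measurable fun x => ENNReal.ofReal (min |g x| (n : ℝ)) := fun n =>
      ((continuous_abs.comp hgc).min continuous_const).measurable.ennreal_ofReal
    have hmono : Monotone fun (n : ℕ) (x : S) => ENNReal.ofReal (min |g x| (n : ℝ)) := by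
      intro m n hmn x
      exact ENNReal.ofReal_le_ofReal (min_le_min le_rfl (by exact_mod_cast hmn))
    calc ∫⁻ x, ENNReal.ofReal |g x| ∂γstar
        = ∫⁻ x, ⨆ n : ℕ, ENNReal.ofReal (min |g x| (n : ℝ)) ∂γstar := by
          refine lintegral_congr fun x => (hsup x).symm
      _ = ⨆ n : ℕ, ∫⁻ x, ENNReal.ofReal (min |g x| (n : ℝ)) ∂γstar := lintegral_iSup hmeas hmono
      _ ≤ ENNReal.ofReal C := iSup_le hlin
  refine ⟨hgc.aestronglyMeasurable, ?_⟩
  rw [hasFiniteIntegral_iff_norm]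
  refine lt_of_le_of_lt ?_ (lt_of_le_of_lt hlim ENNReal.ofReal_lt_top)
  refine le_of_eq (lintegral_congr fun x => ?_)
  rw [Real.norm_eq_abs]


end
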